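/- In every legal configuration of the crossover gadget, the two vertical external edges A and B do not both point outward (away from the gadget); equivalently, A can point outward only if B points inward, and vice versa. Moreover, there exists a legal configuration in which A points outward and a legal configuration in which B points outward. -/

import Mathlib

/-! The crossover gadget of Nondeterministic Constraint Logic.

Vertices `u1, …, u10` are represented by `0, …, 9 : Fin 10`.  Edges `A, B, C, D, E`
have weight 2 ("blue"), the remaining edges weight 1 ("red").  `A, B, C, D` are
dangling (external) edges; `A` and `B` are the vertical external edges. -/

inductive CEdge
  | A | B | C | D | E | F | G | H | I | J | K | L | M | N | O | P | Q | R | S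
  deriving DecidableEq

instance : Fintype CEdge :=
  ⟨{.A, .B, .C, .D, .E, .F, .G, .H, .I, .J, .K, .L, .M, .N, .O, .P, .Q, .R, .S},
    fun x => by cases x <;> simp⟩

namespace Crossover

/-- Edge weights: `A, B, C, D, E` are weight-2, the rest weight-1. -/
def weight : CEdge → ℕ
  | .A | .B | .C | .D | .E => 2
  | _ => 1

/-- Endpoints of the edges.  The second component is `none` for a dangling
(external) edge, whose unique gadget vertex is the first component. -/
def ends : CEdge → Fin 10 × Option (Fin 10)
  | .C => (0, none)      -- C dangling at u1
  | .A => (4, none)      -- A dangling at u5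
  | .B => (5, none)      -- B dangling at u6
  | .D => (9, none)      -- D dangling at u10
  | .E => (3, some 6)    -- E : u4–u7
  | .K => (0, some 1)    -- K : u1–u2
  | .L => (0, some 2)    -- L : u1–u3
  | .H => (1, some 2)    -- H : u2–u3
  | .I => (1, some 3)    -- I : u2–u4
  | .J => (2, some 3)    -- J : u3–u4
  | .F => (1, some 4)    -- F : u2–u5
  | .G => (2, some 5)    -- G : u3–u6
  | .M => (4, some 7)    -- M : u5–u8
  | .N => (5, some 8)    -- N : u6–u9
  | .P => (6, some 7)    -- P : u7–u8
  | .Q => (6, some 8)    -- Q : u7–u9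
  | .O => (7, some 8)    -- O : u8–u9
  | .R => (7, some 9)    -- R : u8–u10
  | .S => (8, some 9)    -- S : u9–u10

/-- A configuration assigns a direction to every edge.  For a dangling edge,
`true` means pointing inward (towards its gadget vertex); for an internal edge
with endpoints `(v, some w)`, `true` means pointing towards `w`. -/
abbrev Config := CEdge → Bool

/-- The vertex an edge points into (`none` exactly when a dangling edge points
outward, away from the gadget). -/
def head (cfg : Config) (e : CEdge) : Option (Fin 10) :=
  match ends e, cfg e with
  | (v, none), true => some v
  | (_, none), false => none
  | (_, some w), true => some w
  | (v, some _), false => some v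

/-- The inflow of a vertex: the sum of the weights of the edges directed into it. -/
def inflow (cfg : Config) (v : Fin 10) : ℕ :=
  ∑ e : CEdge, if head cfg e = some v then weight e else 0

/-- A configuration is legal if every vertex has inflow at least 2. -/
def Legal (cfg : Config) : Prop := ∀ v : Fin 10, 2 ≤ inflow cfg v

/-- A dangling (external) edge points inward. -/
def Inward (cfg : Config) (e : CEdge) : Prop := cfg e = true

/-- A dangling (external) edge points outward. -/
def Outward (cfg : Config) (e : CEdge) : Prop := cfg e = false

end Crossover


namespace Crossover

lemma sum_expand (f : CEdge → ℕ) : ∑ e : CEdge, f e =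
    f .A + f .B + f .C + f .D + f .E + f .F + f .G + f .H + f .I + f .J + f .K +
    f .L + f .M + f .N + f .O + f .P + f .Q + f .R + f .S := by
  rw [Finset.sum_eq_multiset_sum]
  show (Multiset.map f (↑[CEdge.A, .B, .C, .D, .E, .F, .G, .H, .I, .J, .K, .L, .M, .N, .O, .P, .Q, .R, .S])).sum = _
  simp only [Multiset.map_coe, Multiset.sum_coe, List.map_cons, List.map_nil, List.sum_cons, List.sum_nil]; ring

/-- Head of `e` when `cfg e = true`. -/
def h1 (e : CEdge) : Option (Fin 10) :=
  match ends e with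
  | (v, none) => some v
  | (_, some w) => some w

/-- Head of `e` when `cfg e = false`. -/
def h0 (e : CEdge) : Option (Fin 10) :=
  match ends e with
  | (_, none) => none
  | (v, some _) => some v

lemma head_eq (cfg : Config) (e : CEdge) : head cfg e = cond (cfg e) (h1 e) (h0 e) := by
  cases hc : cfg e <;> cases e <;> simp_all [head, h1, h0, ends]

lemma term_eq (b : Bool) (x y z : Option (Fin 10)) (a : ℕ) :
    (if cond b x y = z then a else 0) = cond b (if x = z then a else 0) (if y = z then a else 0) := by
  cases b <;> rfl

/-- Indicator of the direction of an edge. -/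
def X (cfg : Config) (e : CEdge) : ℕ := cond (cfg e) 1 0

lemma inflow_eq (cfg : Config) (v : Fin 10) :
    inflow cfg v = ∑ e : CEdge,
      cond (cfg e) (if h1 e = some v then weight e else 0) (if h0 e = some v then weight e else 0) := by
  unfold inflow
  exact Finset.sum_congr rfl fun e _ => by rw [head_eq, term_eq]

lemma cond_w (cfg : Config) (e : CEdge) (w : ℕ) : cond (cfg e) w 0 = w * X cfg e := by
  unfold X; cases cfg e <;> simp

lemma cond_w' (cfg : Config) (e : CEdge) (w : ℕ) : cond (cfg e) 0 w = w - w * X cfg e := by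
  unfold X; cases cfg e <;> simp

lemma X_le (cfg : Config) (e : CEdge) : X cfg e ≤ 1 := by
  unfold X; cases cfg e <;> simp

lemma X_false (cfg : Config) (e : CEdge) (h : cfg e = false) : X cfg e = 0 := by
  unfold X; rw [h]; rfl

end Crossover

open Crossover in
lemma crossover_not_both_outward (cfg : Config) (hL : Legal cfg) :
    ¬ (Outward cfg .A ∧ Outward cfg .B) := by
  rintro ⟨hA, hB⟩
  have hA0 : X cfg .A = 0 := X_false cfg .A hA
  have hB0 : X cfg .B = 0 := X_false cfg .B hB
  have e1 := hL 1
  have e2 := hL 2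
  have e3 := hL 3
  have e4 := hL 4
  have e5 := hL 5
  have e6 := hL 6
  have e7 := hL 7
  have e8 := hL 8
  rw [inflow_eq, sum_expand] at e1 e2 e3 e4 e5 e6 e7 e8
  simp +decide [h1, h0, ends, weight, cond_w, cond_w'] at e1 e2 e3 e4 e5 e6 e7 e8
  have := X_le cfg .E; have := X_le cfg .F; have := X_le cfg .G
  have := X_le cfg .H; have := X_le cfg .I; have := X_le cfg .J
  have := X_le cfg .K; have := X_le cfg .L; have := X_le cfg .M
  have := X_le cfg .N; have := X_le cfg .O; have := X_le cfg .P
  have := X_le cfg .Q; have := X_le cfg .R; have := X_le cfg .S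
  omega

open Crossover in
/-- In every legal configuration of the crossover gadget the vertical external
edges `A` and `B` do not both point outward; moreover there is a legal
configuration in which `A` points outward and one in which `B` points outward. -/
theorem crossover_vertical_external_edges :
    (∀ cfg : Config, Legal cfg → ¬ (Outward cfg .A ∧ Outward cfg .B)) ∧
    (∃ cfg : Config, Legal cfg ∧ Outward cfg .A) ∧
    (∃ cfg : Config, Legal cfg ∧ Outward cfg .B) := by
  refine ⟨fun cfg hL => crossover_not_both_outward cfg hL, ?_, ?_⟩
  · refine ⟨(fun e => match e with
      | .A => false | .G => false | .H => false | .M => false | .R => false | _ => true),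
      fun v => ?_, rfl⟩
    rw [inflow_eq, sum_expand]
    fin_cases v <;> decide
  · refine ⟨(fun e => match e with
      | .B => false | .F => false | .N => false | _ => true),
      fun v => ?_, rfl⟩
    rw [inflow_eq, sum_expand]
    fin_cases v <;> decide
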